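/- Suppose f is differentiable, ‖G(X)‖_F ≤ M₁ for all X ∈ Ω, and β ≥ 12·M₁ > 0. Let X* ∈ Ω satisfy ∇h(X*) = 0. Then either (i) X*ᵀX* = I_p and grad f(X*) = 0 (so X* is a first-order stationary point of the problem of minimizing f over S_{n,p}), or (ii) the smallest eigenvalue of the symmetric matrix X*ᵀX* is at most 2·M₁/β. -/

import Mathlib

open Matrix

attribute [local instance] Matrix.frobeniusNormedAddCommGroup Matrix.frobeniusNormedSpace

namespace ExPen

noncomputable def finner {n p : ℕ} (A B : Matrix (Fin n) (Fin p) ℝ) : ℝ := (Aᵀ * B).trace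

noncomputable def Phi {p : ℕ} (M : Matrix (Fin p) (Fin p) ℝ) : Matrix (Fin p) (Fin p) ℝ :=
  (1 / 2 : ℝ) • (M + Mᵀ)

noncomputable def Amap {n p : ℕ} (X : Matrix (Fin n) (Fin p) ℝ) : Matrix (Fin p) (Fin p) ℝ :=
  (3 / 2 : ℝ) • (1 : Matrix (Fin p) (Fin p) ℝ) - (1 / 2 : ℝ) • (Xᵀ * X)

noncomputable def g {n p : ℕ} (f : Matrix (Fin n) (Fin p) ℝ → ℝ)
    (X : Matrix (Fin n) (Fin p) ℝ) : ℝ := f (X * Amap X)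

noncomputable def hpen {n p : ℕ} (f : Matrix (Fin n) (Fin p) ℝ → ℝ) (β : ℝ)
    (X : Matrix (Fin n) (Fin p) ℝ) : ℝ := g f X + β / 4 * ‖Xᵀ * X - 1‖ ^ 2

noncomputable def dualCLM {n p : ℕ} (G : Matrix (Fin n) (Fin p) ℝ) :
    Matrix (Fin n) (Fin p) ℝ →L[ℝ] ℝ :=
  LinearMap.toContinuousLinearMap
    { toFun := fun D => (Gᵀ * D).trace
      map_add' := by intro D E; simp [Matrix.mul_add]
      map_smul' := by intro c D; simp [Matrix.mul_smul] }

def HasGradAt {n p : ℕ} (φ : Matrix (Fin n) (Fin p) ℝ → ℝ)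
    (X G : Matrix (Fin n) (Fin p) ℝ) : Prop :=
  HasFDerivAt φ (dualCLM G) X

noncomputable def specNorm {n p : ℕ} (X : Matrix (Fin n) (Fin p) ℝ) : ℝ :=
  ‖LinearMap.toContinuousLinearMap
    (Matrix.toEuclideanLin X : EuclideanSpace ℝ (Fin p) →ₗ[ℝ] EuclideanSpace ℝ (Fin n))‖

lemma posSemidef_tmul {n p : ℕ} (X : Matrix (Fin n) (Fin p) ℝ) : (Xᵀ * X).PosSemidef := by
  simpa [Matrix.conjTranspose_eq_transpose_of_trivial] using
    Matrix.posSemidef_conjTranspose_mul_self X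

/-- `Matrix.PosSemidef.sqrt` as it was defined in Mathlib (Dec 2024); it has since been removed. -/
noncomputable def _root_.Matrix.PosSemidef.sqrt {n : Type*} [Fintype n] [DecidableEq n]
    {A : Matrix n n ℝ} (hA : A.PosSemidef) : Matrix n n ℝ :=
  (hA.1.eigenvectorUnitary : Matrix n n ℝ) * diagonal (Real.sqrt ∘ hA.1.eigenvalues) *
    (star hA.1.eigenvectorUnitary : Matrix n n ℝ)

noncomputable def Pst {n p : ℕ} (X : Matrix (Fin n) (Fin p) ℝ) : Matrix (Fin n) (Fin p) ℝ :=
  X * ((posSemidef_tmul X).sqrt)⁻¹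


lemma trace_tmul_eq_sum {n p : ℕ} (A B : Matrix (Fin n) (Fin p) ℝ) :
    (Aᵀ * B).trace = ∑ j, ∑ i, A i j * B i j := by
  simp [Matrix.trace, Matrix.diag, Matrix.mul_apply]

lemma sum_prod_eq {n p : ℕ} (F : Fin n → Fin p → ℝ) :
    (∑ j, ∑ i, F i j) = ∑ x : Fin p × Fin n, F x.2 x.1 := by
  rw [← Finset.univ_product_univ, Finset.sum_product]

lemma norm_sq_eq_trace {n p : ℕ} (A : Matrix (Fin n) (Fin p) ℝ) :
    ‖A‖ ^ 2 = (Aᵀ * A).trace := by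
  have h0 : (0:ℝ) ≤ ∑ i, ∑ j, ‖A i j‖ ^ (2:ℝ) := by positivity
  rw [trace_tmul_eq_sum, Matrix.frobenius_norm_def,
    ← Real.rpow_natCast ((∑ i, ∑ j, ‖A i j‖ ^ (2:ℝ)) ^ ((1:ℝ)/2)) 2,
    ← Real.rpow_mul h0]
  norm_num
  rw [Finset.sum_comm]
  simp [Real.norm_eq_abs, sq, abs_mul_abs_self]

lemma sqrt_le_helper {a b : ℝ} (hb : 0 ≤ b) (h : a ^ 2 ≤ b ^ 2) : a ≤ b := by nlinarith

lemma abs_trace_le {n p : ℕ} (A B : Matrix (Fin n) (Fin p) ℝ) :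
    |(Aᵀ * B).trace| ≤ ‖A‖ * ‖B‖ := by
  have key : ((Aᵀ * B).trace) ^ 2 ≤ (‖A‖ * ‖B‖) ^ 2 := by
    rw [trace_tmul_eq_sum, mul_pow, norm_sq_eq_trace, norm_sq_eq_trace,
      trace_tmul_eq_sum, trace_tmul_eq_sum, sum_prod_eq (fun i j => A i j * B i j),
      sum_prod_eq (fun i j => A i j * A i j), sum_prod_eq (fun i j => B i j * B i j)]
    simpa [sq] using Finset.sum_mul_sq_le_sq_mul_sq (Finset.univ)
      (fun x : Fin p × Fin n => A x.2 x.1) (fun x : Fin p × Fin n => B x.2 x.1)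
  have hb : 0 ≤ ‖A‖ * ‖B‖ := by positivity
  apply sqrt_le_helper hb
  calc |(Aᵀ * B).trace| ^ 2 = ((Aᵀ * B).trace) ^ 2 := sq_abs _
    _ ≤ _ := key

lemma eq_zero_of_trace_tmul_self {n p : ℕ} {A : Matrix (Fin n) (Fin p) ℝ}
    (h : (Aᵀ * A).trace = 0) : A = 0 := by
  rw [trace_tmul_eq_sum] at h
  have h2 := (Finset.sum_eq_zero_iff_of_nonneg
    (fun j _ => Finset.sum_nonneg fun i _ => mul_self_nonneg (A i j))).mp h
  ext i j
  have h3 := (Finset.sum_eq_zero_iff_of_nonneg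
    (fun i _ => mul_self_nonneg (A i j))).mp (h2 j (Finset.mem_univ j)) i (Finset.mem_univ i)
  simpa [mul_self_eq_zero] using h3



lemma isBBM_mul {a b c : ℕ} : IsBoundedBilinearMap ℝ
    (fun P : Matrix (Fin a) (Fin b) ℝ × Matrix (Fin b) (Fin c) ℝ => P.1 * P.2) where
  add_left := fun x₁ x₂ y => Matrix.add_mul _ _ _
  smul_left := fun c x y => Matrix.smul_mul _ _ _
  add_right := fun x y₁ y₂ => Matrix.mul_add _ _ _
  smul_right := fun c x y => Matrix.mul_smul _ _ _
  bound := ⟨1, one_pos, fun x y => by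
    rw [one_mul]; exact Matrix.frobenius_norm_mul x y⟩

noncomputable def tCLM (n p : ℕ) : Matrix (Fin n) (Fin p) ℝ →L[ℝ] Matrix (Fin p) (Fin n) ℝ :=
  LinearMap.toContinuousLinearMap
    { toFun := fun X => Xᵀ
      map_add' := fun X Y => Matrix.transpose_add X Y
      map_smul' := fun c X => Matrix.transpose_smul c X }

@[simp] lemma tCLM_apply {n p : ℕ} (X : Matrix (Fin n) (Fin p) ℝ) : tCLM n p X = Xᵀ := rfl

noncomputable def traceCLM (p : ℕ) : Matrix (Fin p) (Fin p) ℝ →L[ℝ] ℝ :=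
  LinearMap.toContinuousLinearMap
    { toFun := fun X => X.trace
      map_add' := fun X Y => Matrix.trace_add X Y
      map_smul' := fun c X => Matrix.trace_smul c X }

@[simp] lemma traceCLM_apply {p : ℕ} (X : Matrix (Fin p) (Fin p) ℝ) : traceCLM p X = X.trace := rfl

lemma hasFDerivAt_transmul {n p : ℕ} (N : Matrix (Fin n) (Fin p) ℝ) :
    HasFDerivAt (fun X : Matrix (Fin n) (Fin p) ℝ => Xᵀ * X)
      ((isBBM_mul.deriv (Nᵀ, N)).comp ((tCLM n p).prod (ContinuousLinearMap.id ℝ _))) N := by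
  have h1 : HasFDerivAt (fun X : Matrix (Fin n) (Fin p) ℝ => (Xᵀ, X))
      ((tCLM n p).prod (ContinuousLinearMap.id ℝ _)) N :=
    ((tCLM n p).hasFDerivAt).prodMk (hasFDerivAt_id N)
  exact HasFDerivAt.comp (f := fun X : Matrix (Fin n) (Fin p) ℝ => (Xᵀ, X))
    (g := fun P : Matrix (Fin p) (Fin n) ℝ × Matrix (Fin n) (Fin p) ℝ => P.1 * P.2)
    N (isBBM_mul.hasFDerivAt (Nᵀ, N)) h1

lemma specNorm_nonneg {n p : ℕ} (X : Matrix (Fin n) (Fin p) ℝ) : 0 ≤ specNorm X :=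
  norm_nonneg _

lemma euc_norm_sq {k : ℕ} (u : Fin k → ℝ) :
    ‖(WithLp.equiv 2 (Fin k → ℝ)).symm u‖ ^ 2 = u ⬝ᵥ u := by
  rw [EuclideanSpace.norm_eq, Real.sq_sqrt (by positivity)]
  simp [dotProduct, Real.norm_eq_abs, sq, abs_mul_abs_self]

lemma euc_norm_nonneg {k : ℕ} (u : Fin k → ℝ) :
    (0:ℝ) ≤ ‖(WithLp.equiv 2 (Fin k → ℝ)).symm u‖ := norm_nonneg _

lemma abs_dot_le {k : ℕ} (u w : Fin k → ℝ) :
    |u ⬝ᵥ w| ≤ ‖(WithLp.equiv 2 (Fin k → ℝ)).symm u‖ * ‖(WithLp.equiv 2 (Fin k → ℝ)).symm w‖ := by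
  apply sqrt_le_helper (by positivity)
  rw [sq_abs, mul_pow, euc_norm_sq, euc_norm_sq]
  simpa [dotProduct, sq] using
    Finset.sum_mul_sq_le_sq_mul_sq Finset.univ u w

lemma mulVec_norm_le {n p : ℕ} (X : Matrix (Fin n) (Fin p) ℝ) (w : Fin p → ℝ) :
    ‖(WithLp.equiv 2 (Fin n → ℝ)).symm (X *ᵥ w)‖
      ≤ specNorm X * ‖(WithLp.equiv 2 (Fin p → ℝ)).symm w‖ := by
  have h := (LinearMap.toContinuousLinearMap
    (Matrix.toEuclideanLin X : EuclideanSpace ℝ (Fin p) →ₗ[ℝ] EuclideanSpace ℝ (Fin n))).le_opNorm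
    ((WithLp.equiv 2 (Fin p → ℝ)).symm w)
  simpa [Matrix.toEuclideanLin_apply_piLp_toLp, specNorm] using h

lemma tmulVec_norm_le {n p : ℕ} (X : Matrix (Fin n) (Fin p) ℝ) (v : Fin n → ℝ) :
    ‖(WithLp.equiv 2 (Fin p → ℝ)).symm (Xᵀ *ᵥ v)‖
      ≤ specNorm X * ‖(WithLp.equiv 2 (Fin n → ℝ)).symm v‖ := by
  set q := Xᵀ *ᵥ v with hq
  set nq := ‖(WithLp.equiv 2 (Fin p → ℝ)).symm q‖ with hnq
  have hs := specNorm_nonneg X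
  have hv := euc_norm_nonneg v
  have hnq0 : 0 ≤ nq := norm_nonneg _
  by_cases h0 : nq = 0
  · rw [h0]; positivity
  · have key : nq ^ 2 ≤ ‖(WithLp.equiv 2 (Fin n → ℝ)).symm v‖ * (specNorm X * nq) := by
      have e1 : nq ^ 2 = q ⬝ᵥ q := euc_norm_sq q
      have e2 : q ⬝ᵥ q = v ⬝ᵥ (X *ᵥ q) := by
        rw [hq, Matrix.mulVec_transpose, Matrix.dotProduct_mulVec]
      have e3 : |v ⬝ᵥ (X *ᵥ q)| ≤ ‖(WithLp.equiv 2 (Fin n → ℝ)).symm v‖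
          * ‖(WithLp.equiv 2 (Fin n → ℝ)).symm (X *ᵥ q)‖ := abs_dot_le _ _
      have e4 := mulVec_norm_le X q
      calc nq ^ 2 = v ⬝ᵥ (X *ᵥ q) := by rw [e1, e2]
        _ ≤ |v ⬝ᵥ (X *ᵥ q)| := le_abs_self _
        _ ≤ _ := e3
        _ ≤ _ := by
            apply mul_le_mul_of_nonneg_left _ hv
            exact e4
    have hpos : 0 < nq := lt_of_le_of_ne hnq0 (Ne.symm h0)
    nlinarith [key]

lemma norm_transpose_mul_le {n p q : ℕ} (X : Matrix (Fin n) (Fin p) ℝ)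
    (Gm : Matrix (Fin n) (Fin q) ℝ) : ‖Xᵀ * Gm‖ ≤ specNorm X * ‖Gm‖ := by
  apply sqrt_le_helper (mul_nonneg (specNorm_nonneg X) (norm_nonneg _))
  have trsum : ∀ {a b : ℕ} (A : Matrix (Fin a) (Fin b) ℝ), ‖A‖^2 = ∑ j, ∑ i, A i j * A i j := by
    intro a b A
    rw [show ‖A‖^2 = (Aᵀ * A).trace from ?_]
    · simp [Matrix.trace, Matrix.diag, Matrix.mul_apply]
    · -- norm_sq_eq_trace (restated inline to keep file self-contained)
      have h0 : (0:ℝ) ≤ ∑ i, ∑ j, ‖A i j‖ ^ (2:ℝ) := by positivity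
      rw [Matrix.frobenius_norm_def,
        ← Real.rpow_natCast ((∑ i, ∑ j, ‖A i j‖ ^ (2:ℝ)) ^ ((1:ℝ)/2)) 2,
        ← Real.rpow_mul h0]
      norm_num
      rw [Finset.sum_comm]
      simp [Matrix.trace, Matrix.diag, Matrix.mul_apply, Real.norm_eq_abs, sq, abs_mul_abs_self]
  rw [trsum (Xᵀ * Gm), mul_pow, trsum Gm]
  have hcol : ∀ j, ∑ i, (Xᵀ * Gm) i j * (Xᵀ * Gm) i j
      ≤ specNorm X ^ 2 * ∑ i, Gm i j * Gm i j := by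
    intro j
    have hc : (fun i => (Xᵀ * Gm) i j) = Xᵀ *ᵥ (fun k => Gm k j) := by
      ext i; simp [Matrix.mul_apply, Matrix.mulVec, dotProduct]
    have h1 := tmulVec_norm_le X (fun k => Gm k j)
    have h2 : ‖(WithLp.equiv 2 (Fin p → ℝ)).symm (Xᵀ *ᵥ fun k => Gm k j)‖ ^ 2
        ≤ (specNorm X * ‖(WithLp.equiv 2 (Fin n → ℝ)).symm (fun k => Gm k j)‖) ^ 2 := by
      apply pow_le_pow_left₀ (norm_nonneg _) h1
    rw [euc_norm_sq, mul_pow, euc_norm_sq] at h2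
    calc ∑ i, (Xᵀ * Gm) i j * (Xᵀ * Gm) i j
        = (Xᵀ *ᵥ fun k => Gm k j) ⬝ᵥ (Xᵀ *ᵥ fun k => Gm k j) := by
          rw [← hc]; rfl
      _ ≤ specNorm X ^ 2 * ((fun k => Gm k j) ⬝ᵥ (fun k => Gm k j)) := h2
      _ = specNorm X ^ 2 * ∑ i, Gm i j * Gm i j := rfl
  calc ∑ j, ∑ i, (Xᵀ * Gm) i j * (Xᵀ * Gm) i j
      ≤ ∑ j, specNorm X ^ 2 * ∑ i, Gm i j * Gm i j :=
        Finset.sum_le_sum fun j _ => hcol j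
    _ = specNorm X ^ 2 * ∑ j, ∑ i, Gm i j * Gm i j := by rw [Finset.mul_sum]



lemma trace_tmul_self_nonneg {n p : ℕ} (A : Matrix (Fin n) (Fin p) ℝ) :
    0 ≤ (Aᵀ * A).trace := by
  have : (Aᵀ * A).trace = ∑ j, ∑ i, A i j * A i j := by
    simp [Matrix.trace, Matrix.diag, Matrix.mul_apply]
  rw [this]
  exact Finset.sum_nonneg fun j _ => Finset.sum_nonneg fun i _ => mul_self_nonneg _

open scoped MatrixOrder in
lemma exists_eq_ct_mul_self {p : ℕ} {Q : Matrix (Fin p) (Fin p) ℝ} (hQ : Q.PosSemidef) :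
    ∃ B : Matrix (Fin p) (Fin p) ℝ, Q = Bᴴ * B := by
  have h0 : (0 : Matrix (Fin p) (Fin p) ℝ) ≤ Q := Matrix.nonneg_iff_posSemidef.mpr hQ
  refine ⟨CFC.sqrt Q, ?_⟩
  have hs : IsSelfAdjoint (CFC.sqrt Q) := (CFC.sqrt_nonneg Q).isSelfAdjoint
  rw [← Matrix.star_eq_conjTranspose, hs.star_eq, CFC.sqrt_mul_sqrt_self Q h0]

lemma trace_mul_nonneg_psd {p : ℕ} {P Q : Matrix (Fin p) (Fin p) ℝ}
    (hP : P.PosSemidef) (hQ : Q.PosSemidef) : 0 ≤ (Q * P).trace := by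
  obtain ⟨B, hB⟩ := exists_eq_ct_mul_self hQ
  obtain ⟨C, hC⟩ := exists_eq_ct_mul_self hP
  rw [hB, hC]
  rw [Matrix.conjTranspose_eq_transpose_of_trivial, Matrix.conjTranspose_eq_transpose_of_trivial]
  have h1 : (Bᵀ * B) * (Cᵀ * C) = Bᵀ * (B * Cᵀ * C) := by
    simp [Matrix.mul_assoc]
  rw [h1, Matrix.trace_mul_comm]
  have h2 : B * Cᵀ * C * Bᵀ = (C * Bᵀ)ᵀ * (C * Bᵀ) := by
    simp [Matrix.transpose_mul, Matrix.mul_assoc]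
  rw [h2]
  exact trace_tmul_self_nonneg _

lemma trace_eig_bound {p : ℕ} {S : Matrix (Fin p) (Fin p) ℝ} (hS : S.IsHermitian) {c : ℝ}
    (hc : ∀ i, c ≤ hS.eigenvalues i) {P : Matrix (Fin p) (Fin p) ℝ} (hP : P.PosSemidef) :
    c * P.trace ≤ (S * P).trace := by
  set U : Matrix (Fin p) (Fin p) ℝ := (hS.eigenvectorUnitary : Matrix (Fin p) (Fin p) ℝ) with hUdef
  have hU : U * star U = 1 := Matrix.mem_unitaryGroup_iff.mp hS.eigenvectorUnitary.2
  have hdiag : (Matrix.diagonal (fun i => hS.eigenvalues i - c)).PosSemidef :=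
    Matrix.PosSemidef.diagonal (fun i => sub_nonneg.mpr (hc i))
  have hsub : Matrix.diagonal (RCLike.ofReal ∘ hS.eigenvalues) - c • (1 : Matrix (Fin p) (Fin p) ℝ)
      = Matrix.diagonal (fun i => hS.eigenvalues i - c) := by
    rw [Matrix.smul_one_eq_diagonal, Matrix.diagonal_sub]
    congr 1
  have h2 : S - c • (1 : Matrix (Fin p) (Fin p) ℝ)
      = U * Matrix.diagonal (fun i => hS.eigenvalues i - c) * Uᴴ := by
    conv_lhs => rw [hS.spectral_theorem, Unitary.conjStarAlgAut_apply]
    rw [← Matrix.star_eq_conjTranspose, ← hsub, ← hUdef]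
    have hcu : c • (1 : Matrix (Fin p) (Fin p) ℝ) = U * (c • (1 : Matrix (Fin p) (Fin p) ℝ)) * star U := by
      rw [Matrix.mul_smul, Matrix.smul_mul, Matrix.mul_one, hU]
    rw [Matrix.mul_sub, Matrix.sub_mul, ← hcu]
  have hpsd : (S - c • (1 : Matrix (Fin p) (Fin p) ℝ)).PosSemidef := by
    rw [h2]
    exact hdiag.mul_mul_conjTranspose_same U
  have h3 := trace_mul_nonneg_psd hP hpsd
  rw [Matrix.sub_mul, Matrix.trace_sub, Matrix.smul_mul, Matrix.one_mul, Matrix.trace_smul] at h3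
  simpa using h3


lemma key_identity {n p : ℕ} (Xs Gm D : Matrix (Fin n) (Fin p) ℝ) (β : ℝ)
    (A Nm Φm : Matrix (Fin p) (Fin p) ℝ) (hA : Aᵀ = A) (hN : Nmᵀ = Nm)
    (hΦ : Φm = (1/2 : ℝ) • (Xsᵀ * Gm + (Xsᵀ * Gm)ᵀ)) :
    (Gmᵀ * (Xs * ((0 : Matrix (Fin p) (Fin p) ℝ) - (1/2 : ℝ) • (Xsᵀ * D + Dᵀ * Xs))
      + D * A)).trace
    + β/4 * ((Nmᵀ * (Xsᵀ * D + Dᵀ * Xs)).trace + ((Xsᵀ * D + Dᵀ * Xs)ᵀ * Nm).trace)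
    = ((Gm * A - Xs * Φm + β • (Xs * Nm))ᵀ * D).trace := by
  subst hΦ
  simp only [zero_sub, Matrix.mul_neg, Matrix.neg_mul, Matrix.mul_smul, Matrix.smul_mul,
    Matrix.mul_add, Matrix.add_mul, Matrix.mul_sub, Matrix.sub_mul,
    Matrix.transpose_add, Matrix.transpose_sub, Matrix.transpose_mul, Matrix.transpose_smul,
    Matrix.transpose_transpose, hA, hN,
    Matrix.trace_add, Matrix.trace_sub, Matrix.trace_neg, Matrix.trace_smul, smul_eq_mul,
    Matrix.mul_assoc]
  have c1 : (Gmᵀ * (D * A)).trace = (A * (Gmᵀ * D)).trace := by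
    rw [← Matrix.mul_assoc, Matrix.trace_mul_comm]
  have c2 : (Gmᵀ * (Xs * (Dᵀ * Xs))).trace = (Xsᵀ * (Gm * (Xsᵀ * D))).trace := by
    calc (Gmᵀ * (Xs * (Dᵀ * Xs))).trace
        = ((Gmᵀ * (Xs * (Dᵀ * Xs)))ᵀ).trace := (Matrix.trace_transpose _).symm
      _ = ((Xsᵀ * D) * (Xsᵀ * Gm)).trace := by
          simp [Matrix.transpose_mul, Matrix.mul_assoc]
      _ = ((Xsᵀ * Gm) * (Xsᵀ * D)).trace := Matrix.trace_mul_comm _ _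
      _ = (Xsᵀ * (Gm * (Xsᵀ * D))).trace := by rw [Matrix.mul_assoc]
  have c3 : (Nm * (Dᵀ * Xs)).trace = (Nm * (Xsᵀ * D)).trace := by
    calc (Nm * (Dᵀ * Xs)).trace
        = ((Nm * (Dᵀ * Xs))ᵀ).trace := (Matrix.trace_transpose _).symm
      _ = ((Xsᵀ * D) * Nm).trace := by simp [Matrix.transpose_mul, Matrix.mul_assoc, hN]
      _ = (Nm * (Xsᵀ * D)).trace := Matrix.trace_mul_comm _ _
  have c4 : (Dᵀ * (Xs * Nm)).trace = (Nm * (Xsᵀ * D)).trace := by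
    calc (Dᵀ * (Xs * Nm)).trace
        = ((Dᵀ * (Xs * Nm))ᵀ).trace := (Matrix.trace_transpose _).symm
      _ = (Nm * (Xsᵀ * D)).trace := by simp [Matrix.transpose_mul, Matrix.mul_assoc, hN]
  have c5 : (Xsᵀ * (D * Nm)).trace = (Nm * (Xsᵀ * D)).trace := by
    calc (Xsᵀ * (D * Nm)).trace
        = ((Xsᵀ * D) * Nm).trace := by rw [Matrix.mul_assoc]
      _ = (Nm * (Xsᵀ * D)).trace := Matrix.trace_mul_comm _ _
  linear_combination c1 - (1/2) * c2 + (β/4) * c3 + (β/4) * c4 + (β/4) * c5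



lemma key_identity2 {n p : ℕ} (Xs Gm : Matrix (Fin n) (Fin p) ℝ)
    (Nm Φm A : Matrix (Fin p) (Fin p) ℝ) (β : ℝ) (hN : Nmᵀ = Nm)
    (hA2 : A = 1 - (1/2 : ℝ) • Nm) (hS2 : Xsᵀ * Xs = 1 + Nm)
    (hΦ : Φm = (1/2 : ℝ) • (Xsᵀ * Gm + (Xsᵀ * Gm)ᵀ))
    (hE : Gm * A - Xs * Φm + β • (Xs * Nm) = 0) :
    β * ((Xsᵀ * Xs) * (Nm * Nm)).trace = (3/2) * ((Nm * Nm)ᵀ * (Xsᵀ * Gm)).trace := by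
  have h0 := congrArg (fun M : Matrix (Fin n) (Fin p) ℝ => (Nm * (Xsᵀ * M)).trace) hE
  simp only [Matrix.mul_add, Matrix.add_mul, Matrix.mul_sub, Matrix.sub_mul,
    Matrix.mul_smul, Matrix.smul_mul, Matrix.mul_zero, Matrix.zero_mul,
    Matrix.trace_add, Matrix.trace_sub, Matrix.trace_smul, Matrix.trace_zero, smul_eq_mul,
    Matrix.mul_one, Matrix.one_mul, hA2, hΦ, Matrix.mul_assoc] at h0
  have hXsK : ∀ M : Matrix (Fin p) (Fin p) ℝ, Xsᵀ * (Xs * M) = (1 + Nm) * M := by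
    intro M; rw [← Matrix.mul_assoc, hS2]
  have e2 : (Nm * (Xsᵀ * (Gm * Nm))).trace = (Nm * (Nm * (Xsᵀ * Gm))).trace := by
    calc (Nm * (Xsᵀ * (Gm * Nm))).trace
        = ((Nm * (Xsᵀ * Gm)) * Nm).trace := by rw [Matrix.mul_assoc, Matrix.mul_assoc]
      _ = (Nm * (Nm * (Xsᵀ * Gm))).trace := by
          rw [Matrix.trace_mul_comm]
  have e3 : (Nm * (Xsᵀ * (Xs * (Xsᵀ * Gm)))).trace
      = (Nm * (Xsᵀ * Gm)).trace + (Nm * (Nm * (Xsᵀ * Gm))).trace := by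
    rw [hXsK, Matrix.add_mul, Matrix.one_mul, Matrix.mul_add, Matrix.trace_add]
  have e4a : (Nm * (Xsᵀ * Gm)ᵀ).trace = (Nm * (Xsᵀ * Gm)).trace := by
    calc (Nm * (Xsᵀ * Gm)ᵀ).trace
        = ((Nm * (Xsᵀ * Gm)ᵀ)ᵀ).trace := (Matrix.trace_transpose _).symm
      _ = ((Xsᵀ * Gm) * Nm).trace := by rw [Matrix.transpose_mul, Matrix.transpose_transpose, hN]
      _ = (Nm * (Xsᵀ * Gm)).trace := Matrix.trace_mul_comm _ _
  have e4b : (Nm * (Nm * (Xsᵀ * Gm)ᵀ)).trace = (Nm * (Nm * (Xsᵀ * Gm))).trace := by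
    calc (Nm * (Nm * (Xsᵀ * Gm)ᵀ)).trace
        = ((Nm * (Nm * (Xsᵀ * Gm)ᵀ))ᵀ).trace := (Matrix.trace_transpose _).symm
      _ = ((Xsᵀ * Gm) * (Nm * Nm)).trace := by
          rw [Matrix.transpose_mul, Matrix.transpose_mul, Matrix.transpose_transpose, hN,
            Matrix.mul_assoc]
      _ = ((Nm * Nm) * (Xsᵀ * Gm)).trace := Matrix.trace_mul_comm _ _
      _ = (Nm * (Nm * (Xsᵀ * Gm))).trace := by rw [Matrix.mul_assoc]
  have e4 : (Nm * (Xsᵀ * (Xs * (Xsᵀ * Gm)ᵀ))).trace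
      = (Nm * (Xsᵀ * Gm)).trace + (Nm * (Nm * (Xsᵀ * Gm))).trace := by
    rw [hXsK, Matrix.add_mul, Matrix.one_mul, Matrix.mul_add, Matrix.trace_add, e4a, e4b]
  have e5 : (Nm * (Xsᵀ * (Xs * Nm))).trace = ((Xsᵀ * Xs) * (Nm * Nm)).trace := by
    calc (Nm * (Xsᵀ * (Xs * Nm))).trace
        = ((Xsᵀ * (Xs * Nm)) * Nm).trace := Matrix.trace_mul_comm _ _
      _ = ((Xsᵀ * Xs) * (Nm * Nm)).trace := by simp [Matrix.mul_assoc]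
  have egr : ((Nm * Nm)ᵀ * (Xsᵀ * Gm)).trace = (Nm * (Nm * (Xsᵀ * Gm))).trace := by
    rw [Matrix.transpose_mul, hN, Matrix.mul_assoc]
  rw [e2, e3, e4, e5] at h0
  rw [egr]
  linarith [h0]

set_option maxHeartbeats 1000000 in
theorem statement_6 {n p : ℕ} (f : Matrix (Fin n) (Fin p) ℝ → ℝ) (β M₁ : ℝ)
    (gradf : Matrix (Fin n) (Fin p) ℝ → Matrix (Fin n) (Fin p) ℝ)
    (hgradf : ∀ Y, HasGradAt f Y (gradf Y))
    (hG : ∀ X : Matrix (Fin n) (Fin p) ℝ, specNorm X ≤ 13 / 12 →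
      ‖gradf (X * Amap X)‖ ≤ M₁)
    (hM₁ : 0 < M₁) (hβ : 12 * M₁ ≤ β)
    (Xs : Matrix (Fin n) (Fin p) ℝ) (hΩ : specNorm Xs ≤ 13 / 12)
    (hstat : HasGradAt (hpen f β) Xs 0) :
    (Xsᵀ * Xs = 1 ∧ gradf Xs - Xs * Phi (Xsᵀ * gradf Xs) = 0) ∨
    (∃ i : Fin p, (posSemidef_tmul Xs).1.eigenvalues i ≤ 2 * M₁ / β) := by
  classical
  set G : Matrix (Fin n) (Fin p) ℝ := gradf (Xs * Amap Xs) with hGdef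
  -- derivative of Amap at Xs
  have h1 := hasFDerivAt_transmul Xs
  have h2 := h1.const_smul ((1/2 : ℝ))
  have h3 := (hasFDerivAt_const ((3/2 : ℝ) • (1 : Matrix (Fin p) (Fin p) ℝ)) Xs).sub h2
  have hAder : HasFDerivAt (fun X : Matrix (Fin n) (Fin p) ℝ => Amap X)
      (_ : Matrix (Fin n) (Fin p) ℝ →L[ℝ] Matrix (Fin p) (Fin p) ℝ) Xs := h3
  have hpair := (hasFDerivAt_id Xs).prodMk hAder
  have hmul := HasFDerivAt.comp (f := fun X : Matrix (Fin n) (Fin p) ℝ => (X, Amap X))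
      (g := fun P : Matrix (Fin n) (Fin p) ℝ × Matrix (Fin p) (Fin p) ℝ => P.1 * P.2)
      Xs (isBBM_mul.hasFDerivAt (Xs, Amap Xs)) hpair
  have hgder := HasFDerivAt.comp (f := fun X : Matrix (Fin n) (Fin p) ℝ => X * Amap X)
      (g := f) Xs (hgradf (Xs * Amap Xs)) hmul
  have hpsi := (hasFDerivAt_transmul Xs).sub_const (1 : Matrix (Fin p) (Fin p) ℝ)
  have hq2 := HasFDerivAt.comp (f := fun M : Matrix (Fin p) (Fin p) ℝ => Mᵀ * M)
      (g := fun M : Matrix (Fin p) (Fin p) ℝ => M.trace)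
      (Xsᵀ * Xs - 1) ((traceCLM p).hasFDerivAt) (hasFDerivAt_transmul (Xsᵀ * Xs - 1))
  have hq3 := HasFDerivAt.comp (f := fun X : Matrix (Fin n) (Fin p) ℝ => Xᵀ * X - 1)
      (g := fun M : Matrix (Fin p) (Fin p) ℝ => (Mᵀ * M).trace)
      Xs hq2 hpsi
  have hq4 := hq3.const_mul (β/4)
  have hsum := hgder.add hq4
  have heq : hpen f β = fun X : Matrix (Fin n) (Fin p) ℝ =>
      f (X * Amap X) + β/4 * ((Xᵀ * X - 1)ᵀ * (Xᵀ * X - 1)).trace := by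
    funext X
    rw [hpen, g, norm_sq_eq_trace]
  have hstat' : HasFDerivAt (fun X : Matrix (Fin n) (Fin p) ℝ =>
      f (X * Amap X) + β/4 * ((Xᵀ * X - 1)ᵀ * (Xᵀ * X - 1)).trace) (dualCLM 0) Xs := by
    rw [← heq]; exact hstat
  have huniq := hsum.unique hstat'
  have hkey : ∀ D : Matrix (Fin n) (Fin p) ℝ,
      (Gᵀ * (Xs * ((0 : Matrix (Fin p) (Fin p) ℝ) - (1/2 : ℝ) • (Xsᵀ * D + Dᵀ * Xs))
        + D * Amap Xs)).trace
      + β/4 * (((Xsᵀ * Xs - 1)ᵀ * (Xsᵀ * D + Dᵀ * Xs)).trace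
        + ((Xsᵀ * D + Dᵀ * Xs)ᵀ * (Xsᵀ * Xs - 1)).trace) = 0 := by
    intro D
    have hD := congrArg (fun (L : Matrix (Fin n) (Fin p) ℝ →L[ℝ] ℝ) => L D) huniq
    have hD' : (Gᵀ * (Xs * ((0 : Matrix (Fin p) (Fin p) ℝ) - (1/2 : ℝ) • (Xsᵀ * D + Dᵀ * Xs))
        + D * Amap Xs)).trace
        + β/4 * ((Xsᵀ * Xs - 1)ᵀ * (Xsᵀ * D + Dᵀ * Xs)
          + (Xsᵀ * D + Dᵀ * Xs)ᵀ * (Xsᵀ * Xs - 1)).trace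
        = ((0 : Matrix (Fin n) (Fin p) ℝ)ᵀ * D).trace := hD
    rw [Matrix.trace_add] at hD'
    simpa using hD'
  -- symmetry facts
  have hAsym : (Amap Xs)ᵀ = Amap Xs := by
    simp [Amap, Matrix.transpose_sub, Matrix.transpose_smul, Matrix.transpose_mul,
      Matrix.transpose_one, Matrix.transpose_transpose]
  have hNsym : (Xsᵀ * Xs - 1)ᵀ = Xsᵀ * Xs - 1 := by
    simp [Matrix.transpose_sub, Matrix.transpose_mul, Matrix.transpose_one,
      Matrix.transpose_transpose]
  -- the gradient of hpen vanishes:  E = 0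
  have hEzero : G * Amap Xs - Xs * Phi (Xsᵀ * G) + β • (Xs * (Xsᵀ * Xs - 1)) = 0 := by
    apply eq_zero_of_trace_tmul_self
    have h := hkey (G * Amap Xs - Xs * Phi (Xsᵀ * G) + β • (Xs * (Xsᵀ * Xs - 1)))
    rw [key_identity Xs G _ β (Amap Xs) (Xsᵀ * Xs - 1) (Phi (Xsᵀ * G)) hAsym hNsym rfl] at h
    exact h
  clear h1 h2 h3 hAder hpair hmul hgder hpsi hq2 hq3 hq4 hsum heq hstat' huniq hkey hstat hgradf
  by_cases hlam : ∃ i : Fin p, (posSemidef_tmul Xs).1.eigenvalues i ≤ 2 * M₁ / β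
  · exact Or.inr hlam
  push_neg at hlam
  have hβpos : (0:ℝ) < β := lt_of_lt_of_le (by linarith) hβ
  have hGnorm : ‖G‖ ≤ M₁ := hG Xs hΩ
  have hNpsd : ((Xsᵀ * Xs - 1) * (Xsᵀ * Xs - 1)).PosSemidef := by
    have hrw : (Xsᵀ * Xs - 1) * (Xsᵀ * Xs - 1) = (Xsᵀ * Xs - 1)ᵀ * (Xsᵀ * Xs - 1) := by
      rw [hNsym]
    rw [hrw]
    exact posSemidef_tmul (Xsᵀ * Xs - 1)
  have hA2 : Amap Xs = 1 - (1/2 : ℝ) • (Xsᵀ * Xs - 1) := by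
    rw [Amap, smul_sub]
    module
  have hS2 : Xsᵀ * Xs = 1 + (Xsᵀ * Xs - 1) := by abel
  have hid2 := key_identity2 Xs G (Xsᵀ * Xs - 1) (Phi (Xsᵀ * G)) (Amap Xs) β hNsym hA2 hS2
    rfl hEzero
  -- norm bounds
  have hKnorm : ‖Xsᵀ * G‖ ≤ 13/12 * M₁ := by
    refine (norm_transpose_mul_le Xs G).trans ?_
    have := mul_le_mul hΩ hGnorm (norm_nonneg G) (by norm_num : (0:ℝ) ≤ 13/12)
    linarith
  have habs : |(((Xsᵀ * Xs - 1) * (Xsᵀ * Xs - 1))ᵀ * (Xsᵀ * G)).trace|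
      ≤ ‖(Xsᵀ * Xs - 1) * (Xsᵀ * Xs - 1)‖ * ‖Xsᵀ * G‖ := abs_trace_le _ _
  have hNN : ‖(Xsᵀ * Xs - 1) * (Xsᵀ * Xs - 1)‖ ≤ ‖Xsᵀ * Xs - 1‖ * ‖Xsᵀ * Xs - 1‖ :=
    Matrix.frobenius_norm_mul _ _
  have hTrNN : ((Xsᵀ * Xs - 1) * (Xsᵀ * Xs - 1)).trace = ‖Xsᵀ * Xs - 1‖ ^ 2 := by
    conv_lhs => rw [show (Xsᵀ * Xs - 1) * (Xsᵀ * Xs - 1)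
      = (Xsᵀ * Xs - 1)ᵀ * (Xsᵀ * Xs - 1) by rw [hNsym]]
    exact (norm_sq_eq_trace _).symm
  have hlow := trace_eig_bound (posSemidef_tmul Xs).1 (fun i => le_of_lt (hlam i)) hNpsd
  -- combine inequalities to get N = 0
  have hx : (0:ℝ) ≤ ‖Xsᵀ * Xs - 1‖ := norm_nonneg _
  have hNzero : Xsᵀ * Xs - 1 = 0 := by
    have hnormsq : ‖Xsᵀ * Xs - 1‖ ^ 2 ≤ 0 := by
      have b1 : 2 * M₁ / β * ‖Xsᵀ * Xs - 1‖ ^ 2 ≤ ((Xsᵀ * Xs) * ((Xsᵀ * Xs - 1) * (Xsᵀ * Xs - 1))).trace := by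
        rw [← hTrNN]; exact hlow
      have b2 : β * ((Xsᵀ * Xs) * ((Xsᵀ * Xs - 1) * (Xsᵀ * Xs - 1))).trace
          = (3/2) * (((Xsᵀ * Xs - 1) * (Xsᵀ * Xs - 1))ᵀ * (Xsᵀ * G)).trace := hid2
      have b3 : (((Xsᵀ * Xs - 1) * (Xsᵀ * Xs - 1))ᵀ * (Xsᵀ * G)).trace
          ≤ ‖Xsᵀ * Xs - 1‖ * ‖Xsᵀ * Xs - 1‖ * (13/12 * M₁) := by
        calc (((Xsᵀ * Xs - 1) * (Xsᵀ * Xs - 1))ᵀ * (Xsᵀ * G)).trace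
            ≤ |(((Xsᵀ * Xs - 1) * (Xsᵀ * Xs - 1))ᵀ * (Xsᵀ * G)).trace| := le_abs_self _
          _ ≤ ‖(Xsᵀ * Xs - 1) * (Xsᵀ * Xs - 1)‖ * ‖Xsᵀ * G‖ := habs
          _ ≤ ‖Xsᵀ * Xs - 1‖ * ‖Xsᵀ * Xs - 1‖ * (13/12 * M₁) := by
              apply mul_le_mul hNN hKnorm (norm_nonneg _)
              positivity
      have hdiv : β * (2 * M₁ / β * ‖Xsᵀ * Xs - 1‖ ^ 2) = 2 * M₁ * ‖Xsᵀ * Xs - 1‖ ^ 2 := by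
        field_simp
      nlinarith [sq_nonneg (‖Xsᵀ * Xs - 1‖)]
    have : ‖Xsᵀ * Xs - 1‖ = 0 := by nlinarith
    exact norm_eq_zero.mp this
  left
  have hS1 : Xsᵀ * Xs = 1 := by rwa [sub_eq_zero] at hNzero
  refine ⟨hS1, ?_⟩
  have hA1 : Amap Xs = 1 := by
    rw [Amap, hS1, ← sub_smul]
    norm_num
  have hY : Xs * Amap Xs = Xs := by rw [hA1, Matrix.mul_one]
  have hGXs : G = gradf Xs := by rw [hGdef, hY]
  rw [hGXs, hA1, hNzero] at hEzero
  simpa using hEzero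


end ExPen
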